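/- For every integer k ≥ 2, ∫_k^{k+1} (sin(πu)/(πu))² du ≥ (1/(3π²)) ∫_k^{k+1} u^{−2} du = 1/(3π² k(k+1)); consequently for x > 1, ∫_x^∞ (sin(πu)/(πu))² du ≥ 1/(3π² ⌈x⌉). -/

import Mathlib

open MeasureTheory Set

private lemma aux_inv_sq (k : ℕ) (hk : 2 ≤ k) :
    ∫ u in (k : ℝ)..(k + 1 : ℝ), u⁻¹ ^ 2 = 1 / (k * (k + 1)) := by
  have hk0 : (0:ℝ) < k := by positivity
  have h0 : (0:ℝ) ∉ Set.uIcc (k:ℝ) (k+1:ℝ) := by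
    rw [Set.uIcc_of_le (by linarith)]
    intro h; linarith [h.1]
  have key : ∫ u in (k : ℝ)..(k + 1 : ℝ), u ^ (-2 : ℤ)
      = ((k+1:ℝ) ^ ((-2:ℤ) + 1) - (k:ℝ) ^ ((-2:ℤ)+1)) / (((-2:ℤ):ℝ)+1) :=
    integral_zpow (Or.inr ⟨by decide, h0⟩)
  rw [show (∫ u in (k : ℝ)..(k + 1 : ℝ), u⁻¹ ^ 2)
      = ∫ u in (k : ℝ)..(k + 1 : ℝ), u ^ (-2 : ℤ) from
    intervalIntegral.integral_congr (fun u hu => by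
      rw [zpow_neg, inv_pow, zpow_two, sq]), key]
  norm_num
  rw [inv_sub_inv (by linarith) (by linarith)]
  ring_nf
  field_simp

private lemma aux_sin_sq (k : ℕ) :
    ∫ u in (k : ℝ)..(k + 1 : ℝ), Real.sin (Real.pi * u) ^ 2 = 1 / 2 := by
  have hπ : Real.pi ≠ 0 := Real.pi_ne_zero
  rw [intervalIntegral.integral_comp_mul_left (fun v => Real.sin v ^ 2) hπ]
  rw [integral_sin_sq]
  have h1 : Real.sin (Real.pi * k) = 0 := by
    rw [mul_comm]; exact Real.sin_nat_mul_pi k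
  have h2 : Real.sin (Real.pi * (k+1)) = 0 := by
    rw [mul_comm]; exact_mod_cast Real.sin_nat_mul_pi (k+1)
  rw [h1, h2]
  field_simp; ring
  exact mul_inv_cancel₀ hπ

private lemma aux_lb (sinc : ℝ → ℝ)
    (hsinc : ∀ u : ℝ, sinc u =
      if u = 0 then 1 else Real.sin (Real.pi * u) / (Real.pi * u))
    (k : ℕ) (hk : 2 ≤ k) :
    1 / (3 * Real.pi ^ 2 * k * (k + 1)) ≤ ∫ u in (k : ℝ)..(k + 1 : ℝ), sinc u ^ 2 := by
  have hπ : (0:ℝ) < Real.pi := Real.pi_pos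
  have hk0 : (0:ℝ) < k := by positivity
  have huIcc : Set.uIcc (k:ℝ) (k+1:ℝ) = Set.Icc (k:ℝ) (k+1:ℝ) := Set.uIcc_of_le (by linarith)
  have hcongr : (∫ u in (k:ℝ)..(k+1:ℝ), sinc u ^ 2)
      = ∫ u in (k:ℝ)..(k+1:ℝ), (Real.sin (Real.pi * u) / (Real.pi * u)) ^ 2 := by
    refine intervalIntegral.integral_congr (fun u hu => ?_)
    rw [huIcc] at hu
    rw [hsinc u, if_neg (by intro h; rw [h] at hu; linarith [hu.1])]
  rw [hcongr]
  have hcont : ContinuousOn (fun u => (Real.sin (Real.pi * u) / (Real.pi * u)) ^ 2)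
      (Set.uIcc (k:ℝ) (k+1:ℝ)) := by
    apply ContinuousOn.pow
    apply ContinuousOn.div
    · exact (Real.continuous_sin.comp (continuous_const.mul continuous_id)).continuousOn
    · exact (continuous_const.mul continuous_id).continuousOn
    · intro u hu
      rw [huIcc] at hu
      have : (0:ℝ) < u := by linarith [hu.1]
      positivity
  have hmono : (∫ u in (k:ℝ)..(k+1:ℝ),
        Real.sin (Real.pi * u) ^ 2 / (Real.pi ^ 2 * ((k:ℝ)+1) ^ 2))
      ≤ ∫ u in (k:ℝ)..(k+1:ℝ), (Real.sin (Real.pi * u) / (Real.pi * u)) ^ 2 := by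
    refine intervalIntegral.integral_mono_on (by linarith) ?_ (hcont.intervalIntegrable) ?_
    · apply Continuous.intervalIntegrable; continuity
    · intro u hu
      have hu1 : (0:ℝ) < u := by linarith [hu.1]
      rw [div_pow, mul_pow]
      have h1 : (0:ℝ) < Real.pi^2 * u^2 := by positivity
      apply div_le_div_of_nonneg_left (by positivity) h1
      gcongr
      exact hu.2
  have hval : (∫ u in (k:ℝ)..(k+1:ℝ),
        Real.sin (Real.pi * u) ^ 2 / (Real.pi ^ 2 * ((k:ℝ)+1) ^ 2))
      = 1 / (2 * (Real.pi ^ 2 * ((k:ℝ)+1) ^ 2)) := by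
    simp_rw [div_eq_mul_inv]
    rw [intervalIntegral.integral_mul_const, aux_sin_sq k]
    field_simp
  refine le_trans ?_ (hval ▸ hmono)
  rw [div_le_div_iff₀ (by positivity) (by positivity)]
  have hk2 : (2:ℝ) ≤ (k:ℝ) := by exact_mod_cast hk
  nlinarith [mul_nonneg (mul_nonneg (sq_nonneg Real.pi) (by linarith : (0:ℝ) ≤ (k:ℝ)+1))
    (by linarith : (0:ℝ) ≤ (k:ℝ)-2)]

private lemma aux_iUnion (m : ℕ) :
    (⋃ n : ℕ, Set.Ioc ((m:ℝ) + n) ((m:ℝ) + n + 1)) = Set.Ioi (m:ℝ) := by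
  ext u
  simp only [Set.mem_iUnion, Set.mem_Ioc, Set.mem_Ioi]
  constructor
  · rintro ⟨n, h1, h2⟩
    have : (0:ℝ) ≤ n := Nat.cast_nonneg n
    linarith
  · intro hu
    have hceil : (m:ℤ) < ⌈u⌉ := by
      rw [Int.lt_ceil]; exact_mod_cast hu
    have hn : (((⌈u⌉ - m - 1).toNat : ℤ) : ℝ) = (⌈u⌉:ℝ) - m - 1 := by
      have := Int.toNat_of_nonneg (by omega : 0 ≤ ⌈u⌉ - m - 1)
      rw [this]; push_cast; ring
    refine ⟨(⌈u⌉ - m - 1).toNat, ?_, ?_⟩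
    · have h := Int.ceil_lt_add_one u
      push_cast at hn ⊢
      linarith
    · have h := Int.le_ceil u
      push_cast at hn ⊢
      linarith

private lemma aux_integrable (sinc : ℝ → ℝ)
    (hsinc : ∀ u : ℝ, sinc u =
      if u = 0 then 1 else Real.sin (Real.pi * u) / (Real.pi * u))
    (x : ℝ) (hx : 0 < x) :
    IntegrableOn (fun u => sinc u ^ 2) (Set.Ioi x) := by
  have hπ : (0:ℝ) < Real.pi := Real.pi_pos
  have hg : IntegrableOn (fun u : ℝ => Real.pi ^ (-2:ℝ) * u ^ (-2:ℝ)) (Set.Ioi x) :=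
    (integrableOn_Ioi_rpow_of_lt (by norm_num) hx).const_mul _
  have hmeas : AEStronglyMeasurable (fun u => sinc u ^ 2) (volume.restrict (Set.Ioi x)) := by
    have : sinc = fun u => if u = 0 then 1 else Real.sin (Real.pi * u) / (Real.pi * u) :=
      funext hsinc
    rw [this]
    apply Measurable.aestronglyMeasurable
    apply Measurable.pow _ measurable_const
    exact Measurable.ite (measurableSet_singleton 0) measurable_const
      ((Real.measurable_sin.comp (measurable_const_mul _)).div (measurable_const_mul _))
  refine Integrable.mono hg hmeas ?_
  filter_upwards [ae_restrict_mem measurableSet_Ioi] with u hu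
  have hu0 : 0 < u := lt_trans hx hu
  rw [Real.norm_eq_abs, Real.norm_eq_abs, abs_of_nonneg (sq_nonneg _),
    hsinc u, if_neg (ne_of_gt hu0)]
  rw [div_pow, Real.rpow_neg (le_of_lt hπ), Real.rpow_neg (le_of_lt hu0)]
  rw [abs_of_nonneg (by positivity)]
  rw [show (2:ℝ) = ((2:ℕ):ℝ) by norm_num, Real.rpow_natCast, Real.rpow_natCast]
  rw [mul_pow, ← mul_inv, ← one_div, div_le_div_iff₀ (by positivity) (by positivity), one_mul]
  nlinarith [Real.sin_sq_le_one (Real.pi * u), mul_pos (pow_pos hπ 2) (pow_pos hu0 2)]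

private lemma aux_hasSum (m : ℕ) (hm : 2 ≤ m) :
    HasSum (fun n : ℕ => 1 / (3 * Real.pi ^ 2 * ((m:ℝ) + n) * ((m:ℝ) + n + 1)))
      (1 / (3 * Real.pi ^ 2 * m)) := by
  have hπ : (0:ℝ) < Real.pi := Real.pi_pos
  have hm0 : (0:ℝ) < m := by positivity
  set f : ℕ → ℝ := fun n => 1 / (3 * Real.pi ^ 2 * ((m:ℝ) + n)) with hf
  have hterm : ∀ n : ℕ, 1 / (3 * Real.pi ^ 2 * ((m:ℝ) + n) * ((m:ℝ) + n + 1))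
      = f n - f (n + 1) := by
    intro n
    simp only [hf]
    push_cast
    rw [div_sub_div _ _ (by positivity) (by positivity),
      div_eq_div_iff (by positivity) (by positivity)]
    ring
  rw [hasSum_iff_tendsto_nat_of_nonneg (fun n => by positivity)]
  have hsum : ∀ n : ℕ, (∑ i ∈ Finset.range n,
      1 / (3 * Real.pi ^ 2 * ((m:ℝ) + i) * ((m:ℝ) + i + 1))) = f 0 - f n := by
    intro n
    rw [Finset.sum_congr rfl (fun i _ => hterm i)]
    exact Finset.sum_range_sub' f n
  simp_rw [hsum]
  have h1 : Filter.Tendsto (fun n : ℕ => 3 * Real.pi ^ 2 * ((m:ℝ) + n))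
      Filter.atTop Filter.atTop := by
    apply Filter.Tendsto.const_mul_atTop (by positivity)
    exact Filter.tendsto_atTop_add_const_left _ _ tendsto_natCast_atTop_atTop
  have h2 : Filter.Tendsto f Filter.atTop (nhds 0) := by
    simp only [hf, one_div]
    exact h1.inv_tendsto_atTop
  have h3 := Filter.Tendsto.const_sub (f 0) h2
  simp only [sub_zero] at h3
  convert h3 using 2
  simp [hf]

theorem stmt12 (sinc : ℝ → ℝ)
    (hsinc : ∀ u : ℝ, sinc u =
      if u = 0 then 1 else Real.sin (Real.pi * u) / (Real.pi * u)) :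
    (∀ k : ℕ, 2 ≤ k →
      (1 / (3 * Real.pi ^ 2)) * ∫ u in (k : ℝ)..(k + 1 : ℝ), u⁻¹ ^ 2 ≤
        ∫ u in (k : ℝ)..(k + 1 : ℝ), sinc u ^ 2) ∧
    (∀ k : ℕ, 2 ≤ k →
      (1 / (3 * Real.pi ^ 2)) * ∫ u in (k : ℝ)..(k + 1 : ℝ), u⁻¹ ^ 2 =
        1 / (3 * Real.pi ^ 2 * k * (k + 1))) ∧
    (∀ x : ℝ, 1 < x →
      1 / (3 * Real.pi ^ 2 * (⌈x⌉ : ℝ)) ≤ ∫ u in Set.Ioi x, sinc u ^ 2) := by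
  have hπ : (0:ℝ) < Real.pi := Real.pi_pos
  have h2 : ∀ k : ℕ, 2 ≤ k →
      (1 / (3 * Real.pi ^ 2)) * ∫ u in (k : ℝ)..(k + 1 : ℝ), u⁻¹ ^ 2 =
        1 / (3 * Real.pi ^ 2 * k * (k + 1)) := by
    intro k hk
    have hk0 : (0:ℝ) < k := by positivity
    rw [aux_inv_sq k hk]
    field_simp
  refine ⟨fun k hk => ?_, h2, fun x hx => ?_⟩
  · rw [h2 k hk]
    exact aux_lb sinc hsinc k hk
  · have hx0 : (0:ℝ) < x := lt_trans one_pos hx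
    have hceil2 : (2:ℤ) ≤ ⌈x⌉ := by
      have : (1:ℤ) < ⌈x⌉ := by rw [Int.lt_ceil]; exact_mod_cast hx
      omega
    set m : ℕ := ⌈x⌉.toNat with hmdef
    have hm2 : 2 ≤ m := by omega
    have hmcast : ((⌈x⌉ : ℤ) : ℝ) = (m : ℝ) := by
      rw [hmdef]
      exact_mod_cast (Int.toNat_of_nonneg (by omega)).symm
    have hm0 : (0:ℝ) < m := by positivity
    have hxm : x ≤ (m:ℝ) := by rw [← hmcast]; exact Int.le_ceil x
    have hint : IntegrableOn (fun u => sinc u ^ 2) (Set.Ioi x) :=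
      aux_integrable sinc hsinc x hx0
    have hsub : (∫ u in Set.Ioi (m:ℝ), sinc u ^ 2) ≤ ∫ u in Set.Ioi x, sinc u ^ 2 := by
      apply setIntegral_mono_set hint
      · exact Filter.Eventually.of_forall (fun u => sq_nonneg _)
      · exact (Set.Ioi_subset_Ioi hxm).eventuallyLE
    have hdisj : Pairwise (Function.onFun Disjoint
        (fun n : ℕ => Set.Ioc ((m:ℝ) + n) ((m:ℝ) + n + 1))) := by
      have key : ∀ i j : ℕ, i < j → Disjoint (Set.Ioc ((m:ℝ) + i) ((m:ℝ) + i + 1))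
          (Set.Ioc ((m:ℝ) + j) ((m:ℝ) + j + 1)) := by
        intro i j h
        rw [Set.disjoint_left]
        intro u h1 h2
        have : (i:ℝ) + 1 ≤ (j:ℝ) := by exact_mod_cast h
        have := h1.2
        have := h2.1
        linarith
      intro i j hij
      rcases lt_or_gt_of_ne hij with h | h
      · exact key i j h
      · exact (key j i h).symm
    have hintm : IntegrableOn (fun u => sinc u ^ 2)
        (⋃ n : ℕ, Set.Ioc ((m:ℝ) + n) ((m:ℝ) + n + 1)) := by
      rw [aux_iUnion m]
      exact aux_integrable sinc hsinc m hm0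
    have hS : HasSum (fun n : ℕ => ∫ u in Set.Ioc ((m:ℝ) + n) ((m:ℝ) + n + 1), sinc u ^ 2)
        (∫ u in Set.Ioi (m:ℝ), sinc u ^ 2) := by
      have := hasSum_integral_iUnion (fun n : ℕ => measurableSet_Ioc) hdisj hintm
      rwa [aux_iUnion m] at this
    have hterm_le : ∀ n : ℕ,
        1 / (3 * Real.pi ^ 2 * ((m:ℝ) + n) * ((m:ℝ) + n + 1))
          ≤ ∫ u in Set.Ioc ((m:ℝ) + n) ((m:ℝ) + n + 1), sinc u ^ 2 := by
      intro n
      have hlb := aux_lb sinc hsinc (m + n) (le_trans hm2 (Nat.le_add_right m n))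
      rw [intervalIntegral.integral_of_le (by linarith)] at hlb
      push_cast at hlb ⊢
      exact hlb
    have hfinal := hasSum_le hterm_le (aux_hasSum m hm2) hS
    calc 1 / (3 * Real.pi ^ 2 * (⌈x⌉ : ℝ)) = 1 / (3 * Real.pi ^ 2 * (m:ℝ)) := by rw [hmcast]
      _ ≤ ∫ u in Set.Ioi (m:ℝ), sinc u ^ 2 := hfinal
      _ ≤ _ := hsub
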